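/- Exact design-based confidence sequence for the ATE (two-sided): if in the design-based setting |τ̂_i| ≤ m almost surely for all i, with constant m > 0, τ_i := E(τ̂_i | F_{i-1}), τ̄_n := (1/n)Σ_{i=1}^n τ_i, and S_n := Σ_{i=1}^n σ̂_i² where σ̂_i² = τ̂_i², then for any α ∈ (0,1), P( ∃ n ≥ 1 : | (1/n)Σ_{i=1}^n τ̂_i − τ̄_n | ≥ (m(m+1)/n)·log(2/α) + (S_n/n)·( ((m+1)/m)·log(1 + 1/m) − 1/m ) ) ≤ α; equivalently, the intervals (1/n)Σ_{i=1}^n τ̂_i ± [ (m(m+1)/n)·log(2/α) + (S_n/n)·( ((m+1)/m)·log(1+1/m) − 1/m ) ] form a valid (1−α) confidence sequence for the average treatment effect τ̄_n. -/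

import Mathlib

open MeasureTheory ProbabilityTheory Filter

section AuxLemmas
open MeasureTheory ProbabilityTheory Filter


/-- `log (1-a) < -a - a^2/2` for `a ∈ (0,1)`. -/
lemma aux_log1 {a : ℝ} (ha0 : 0 < a) (ha1 : a < 1) :
    Real.log (1 - a) < -a - a ^ 2 / 2 := by
  have key : StrictMonoOn (fun x : ℝ => -x - x ^ 2 / 2 - Real.log (1 - x)) (Set.Ico 0 1) := by
    apply strictMonoOn_of_hasDerivWithinAt_pos (convex_Ico 0 1)
      (f' := fun x => -1 - x + (1 - x)⁻¹)
    · apply ContinuousOn.sub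
      · fun_prop
      · apply ContinuousOn.log (by fun_prop)
        intro x hx
        simp only [Set.mem_Ico] at hx
        nlinarith [hx.2]
    · intro x hx
      rw [interior_Ico] at hx
      have h1 : (1 : ℝ) - x ≠ 0 := by simp only [Set.mem_Ioo] at hx; nlinarith [hx.2]
      have : HasDerivAt (fun x : ℝ => -x - x ^ 2 / 2 - Real.log (1 - x))
          (-1 - x + (1 - x)⁻¹) x := by
        have hlog : HasDerivAt (fun x : ℝ => Real.log (1 - x)) ((1 - x)⁻¹ * (0 - 1)) x :=
          (Real.hasDerivAt_log h1).comp x ((hasDerivAt_const x (1:ℝ)).sub (hasDerivAt_id x))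
        have hpoly : HasDerivAt (fun x : ℝ => -x - x ^ 2 / 2) (-1 - 2 * x ^ 1 / 2) x :=
          ((hasDerivAt_id x).neg.sub ((hasDerivAt_pow 2 x).div_const 2)).congr_deriv (by norm_num)
        have := hpoly.sub hlog
        refine this.congr_deriv ?_
        ring
      exact this.hasDerivWithinAt
    · intro x hx
      rw [interior_Ico] at hx
      simp only [Set.mem_Ioo] at hx
      have h1 : (0 : ℝ) < 1 - x := by linarith
      have hx0 : x ≠ 0 := ne_of_gt hx.1
      rw [show -1 - x + (1 - x)⁻¹ = x ^ 2 / (1 - x) by field_simp; ring]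
      positivity
  have h := key (Set.mem_Ico.2 ⟨le_refl 0, one_pos⟩) (Set.mem_Ico.2 ⟨ha0.le, ha1⟩) ha0
  simp only [neg_zero, Real.log_one] at h
  norm_num at h
  linarith

/-- `-log (1-a) < a + a^2/(2*(1-a))` for `a ∈ (0,1)`. -/
lemma aux_log2 {a : ℝ} (ha0 : 0 < a) (ha1 : a < 1) :
    -Real.log (1 - a) < a + a ^ 2 / (2 * (1 - a)) := by
  have key : StrictMonoOn (fun x : ℝ => x + x ^ 2 / (2 * (1 - x)) + Real.log (1 - x))
      (Set.Ico 0 1) := by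
    apply strictMonoOn_of_hasDerivWithinAt_pos (convex_Ico 0 1)
      (f' := fun x => x ^ 2 / (2 * (1 - x) ^ 2))
    · apply ContinuousOn.add
      · apply ContinuousOn.add (by fun_prop)
        apply ContinuousOn.div (by fun_prop) (by fun_prop)
        intro x hx
        simp only [Set.mem_Ico] at hx
        nlinarith [hx.2]
      · apply ContinuousOn.log (by fun_prop)
        intro x hx
        simp only [Set.mem_Ico] at hx
        nlinarith [hx.2]
    · intro x hx
      rw [interior_Ico] at hx
      simp only [Set.mem_Ioo] at hx
      have h1 : (1 : ℝ) - x ≠ 0 := by nlinarith [hx.2]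
      have h1' : (0 : ℝ) < 1 - x := by linarith
      have hlog : HasDerivAt (fun x : ℝ => Real.log (1 - x)) ((1 - x)⁻¹ * (0 - 1)) x :=
        (Real.hasDerivAt_log h1).comp x ((hasDerivAt_const x (1:ℝ)).sub (hasDerivAt_id x))
      have hq : HasDerivAt (fun x : ℝ => x ^ 2 / (2 * (1 - x)))
          ((2 * x ^ 1 * (2 * (1 - x)) - x ^ 2 * (2 * (0 - 1))) / (2 * (1 - x)) ^ 2) x := by
        apply (hasDerivAt_pow 2 x).div
          (((hasDerivAt_const x (1:ℝ)).sub (hasDerivAt_id x)).const_mul 2)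
        simp only [Pi.sub_apply, id_eq]
        intro h; exact h1 (by linarith)
      have hsum := ((hasDerivAt_id x).add hq).add hlog
      have : HasDerivAt (fun x : ℝ => x + x ^ 2 / (2 * (1 - x)) + Real.log (1 - x))
          (x ^ 2 / (2 * (1 - x) ^ 2)) x := by
        refine hsum.congr_deriv ?_
        field_simp
        ring
      exact this.hasDerivWithinAt
    · intro x hx
      rw [interior_Ico] at hx
      simp only [Set.mem_Ioo] at hx
      have h1' : (0 : ℝ) < 1 - x := by linarith
      have hx0 : x ≠ 0 := ne_of_gt hx.1
      positivity
  have h := key (Set.mem_Ico.2 ⟨le_refl 0, one_pos⟩) (Set.mem_Ico.2 ⟨ha0.le, ha1⟩) ha0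
  simp only [Real.log_one] at h
  norm_num at h
  linarith

/-- Fan–Grama–Liu type inequality: for `u ≥ -a`, `u - log(1+u) ≤ K u²` with
`K = (-log(1-a) - a)/a²`. -/
lemma fan_ineq {a : ℝ} (ha0 : 0 < a) (ha1 : a < 1) {u : ℝ} (hu : -a ≤ u) :
    u - Real.log (1 + u) ≤ (-Real.log (1 - a) - a) / a ^ 2 * u ^ 2 := by
  set K : ℝ := (-Real.log (1 - a) - a) / a ^ 2 with hK
  have ha2 : (0:ℝ) < a ^ 2 := by positivity
  have h1a : (0:ℝ) < 1 - a := by linarith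
  have hKhalf : 1 / 2 < K := by
    rw [hK, lt_div_iff₀ ha2]
    nlinarith [aux_log1 ha0 ha1]
  have hK0 : (0:ℝ) < K := by linarith
  have hKa : 2 * K * (1 - a) < 1 := by
    have h2 : -Real.log (1 - a) - a < a ^ 2 / (2 * (1 - a)) := by
      linarith [aux_log2 ha0 ha1]
    rw [hK, show 2 * ((-Real.log (1 - a) - a) / a ^ 2) * (1 - a)
        = (-Real.log (1 - a) - a) * (2 * (1 - a)) / a ^ 2 by ring, div_lt_one ha2]
    exact (lt_div_iff₀ (by positivity)).mp h2
  set u₀ : ℝ := 1 / (2 * K) - 1 with hu₀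
  have h2K : (0:ℝ) < 2 * K := by linarith
  have h₀a : -a < u₀ := by
    rw [hu₀, lt_sub_iff_add_lt, lt_div_iff₀ h2K]
    nlinarith
  have h₀0 : u₀ < 0 := by
    rw [hu₀, sub_neg, div_lt_one h2K]; linarith
  set F : ℝ → ℝ := fun u => K * u ^ 2 - u + Real.log (1 + u) with hF
  have hFa : F (-a) = 0 := by
    simp only [hF]
    have : K * (-a) ^ 2 = -Real.log (1 - a) - a := by
      rw [hK]; field_simp
    rw [this]
    have : (1 : ℝ) + -a = 1 - a := by ring
    rw [this]; ring
  have hF0 : F 0 = 0 := by simp [hF]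
  -- derivative of F
  have hd : ∀ x : ℝ, (-1:ℝ) < x →
      HasDerivAt F (x * (2 * K * (1 + x) - 1) / (1 + x)) x := by
    intro x hx
    have h1 : (1:ℝ) + x ≠ 0 := by linarith
    have hlog : HasDerivAt (fun x : ℝ => Real.log (1 + x)) ((1 + x)⁻¹ * (0 + 1)) x :=
      (Real.hasDerivAt_log h1).comp x ((hasDerivAt_const x (1:ℝ)).add (hasDerivAt_id x))
    have hpoly : HasDerivAt (fun x : ℝ => K * x ^ 2 - x) (K * (2 * x ^ 1) - 1) x :=
      (((hasDerivAt_pow 2 x).const_mul K).sub (hasDerivAt_id x)).congr_deriv (by norm_num)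
    have := hpoly.add hlog
    refine this.congr_deriv ?_
    field_simp
    ring
  have hcont : ∀ {D : Set ℝ}, D ⊆ Set.Ioi (-1 : ℝ) → ContinuousOn F D := by
    intro D hD
    apply ContinuousOn.add (by fun_prop)
    apply ContinuousOn.log (by fun_prop)
    intro x hx
    have := hD hx
    simp only [Set.mem_Ioi] at this
    intro h; linarith
  have ha1' : (-1:ℝ) < -a := by linarith
  -- three monotonicity regions
  have mono1 : StrictMonoOn F (Set.Icc (-a) u₀) := by
    apply strictMonoOn_of_hasDerivWithinAt_pos (convex_Icc _ _)
      (f' := fun x => x * (2 * K * (1 + x) - 1) / (1 + x))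
      (hcont fun x hx => lt_of_lt_of_le ha1' hx.1)
    · intro x hx
      have hx' := interior_subset hx
      exact (hd x (lt_of_lt_of_le ha1' hx'.1)).hasDerivWithinAt
    · intro x hx
      rw [interior_Icc] at hx
      obtain ⟨hxl, hxr⟩ := hx
      have hx1 : (0:ℝ) < 1 + x := by linarith
      apply div_pos _ hx1
      apply mul_pos_of_neg_of_neg (by linarith)
      have : 2 * K * (1 + u₀) = 1 := by rw [hu₀]; field_simp; ring
      nlinarith
  have mono2 : StrictAntiOn F (Set.Icc u₀ 0) := by
    apply strictAntiOn_of_hasDerivWithinAt_neg (convex_Icc _ _)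
      (f' := fun x => x * (2 * K * (1 + x) - 1) / (1 + x))
      (hcont fun x hx => lt_of_lt_of_le (lt_trans ha1' h₀a) hx.1)
    · intro x hx
      have hx' := interior_subset hx
      exact (hd x (lt_of_lt_of_le (lt_trans ha1' h₀a) hx'.1)).hasDerivWithinAt
    · intro x hx
      rw [interior_Icc] at hx
      obtain ⟨hxl, hxr⟩ := hx
      have hx1 : (0:ℝ) < 1 + x := by nlinarith [lt_trans ha1' h₀a]
      apply div_neg_of_neg_of_pos _ hx1
      apply mul_neg_of_neg_of_pos hxr
      have : 2 * K * (1 + u₀) = 1 := by rw [hu₀]; field_simp; ring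
      nlinarith
  have mono3 : StrictMonoOn F (Set.Ici (0:ℝ)) := by
    apply strictMonoOn_of_hasDerivWithinAt_pos (convex_Ici _)
      (f' := fun x => x * (2 * K * (1 + x) - 1) / (1 + x))
      (hcont fun x hx => lt_of_lt_of_le (by norm_num : (-1:ℝ) < 0) hx)
    · intro x hx
      have hx' : (0:ℝ) ≤ x := interior_subset hx
      exact (hd x (by linarith)).hasDerivWithinAt
    · intro x hx
      rw [interior_Ici] at hx
      have hx0 : (0:ℝ) < x := hx
      have hx1 : (0:ℝ) < 1 + x := by linarith
      apply div_pos _ hx1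
      apply mul_pos hx0
      nlinarith
  -- conclude F u ≥ 0
  have hFu : 0 ≤ F u := by
    rcases le_or_gt u u₀ with h | h
    · rw [← hFa]
      exact mono1.monotoneOn (Set.mem_Icc.2 ⟨le_refl _, by linarith⟩)
        (Set.mem_Icc.2 ⟨hu, h⟩) hu
    · rcases le_or_gt u 0 with h' | h'
      · rw [← hF0]
        exact mono2.antitoneOn (Set.mem_Icc.2 ⟨h.le, h'⟩)
          (Set.mem_Icc.2 ⟨h₀0.le, le_refl _⟩) h'
      · rw [← hF0]
        exact mono3.monotoneOn (Set.mem_Ici.2 (le_refl _)) (Set.mem_Ici.2 h'.le) h'.le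
  simp only [hF] at hFu
  linarith

/-- Key exponential inequality for the supermartingale construction. -/
lemma key_exp {m x : ℝ} (hm : 0 < m) (hx : |x| ≤ m) {s : ℝ}
    (hs : s = 1 / (m * (m + 1)) ∨ s = -(1 / (m * (m + 1)))) :
    Real.exp (s * x - (Real.log (1 + 1 / m) - 1 / (m + 1)) / m ^ 2 * x ^ 2) ≤ 1 + s * x := by
  have hm1 : (0:ℝ) < m + 1 := by linarith
  set a : ℝ := 1 / (m + 1) with ha
  have ha0 : 0 < a := by positivity
  have ha1 : a < 1 := by rw [ha, div_lt_one hm1]; linarith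
  have hlog : Real.log (1 + 1 / m) = -Real.log (1 - a) := by
    rw [← Real.log_inv]
    congr 1
    rw [ha]
    field_simp
    rw [add_sub_cancel_right, div_self (ne_of_gt hm)]
  set u : ℝ := s * x with hu
  have hsabs : |s| = 1 / (m * (m + 1)) := by
    rcases hs with h | h <;> rw [h] <;>
      simp [abs_of_pos, abs_of_neg, abs_div, abs_of_pos (mul_pos hm hm1)] <;> rw [abs_of_pos hm1, abs_of_pos hm]
  have huabs : |u| ≤ a := by
    rw [hu, abs_mul, hsabs, ha]
    calc 1 / (m * (m + 1)) * |x| ≤ 1 / (m * (m + 1)) * m := by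
          apply mul_le_mul_of_nonneg_left hx (by positivity)
      _ = 1 / (m + 1) := by field_simp
  have hu_ge : -a ≤ u := neg_le_of_abs_le huabs
  have h1u : (0:ℝ) < 1 + u := by
    have : -1 < -a := by linarith
    linarith [neg_le_of_abs_le huabs]
  have hKs : (-Real.log (1 - a) - a) / a ^ 2 * u ^ 2
      = (Real.log (1 + 1 / m) - 1 / (m + 1)) / m ^ 2 * x ^ 2 := by
    rw [hlog, hu]
    have hs2 : s ^ 2 = (1 / (m * (m + 1))) ^ 2 := by
      rcases hs with h | h <;> rw [h] <;> ring
    rw [mul_pow, ← mul_assoc, hs2, ha]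
    have hm0 : m ≠ 0 := ne_of_gt hm
    have hm10 : m + 1 ≠ 0 := ne_of_gt hm1
    field_simp
  have hfan := fan_ineq ha0 ha1 hu_ge
  rw [hKs] at hfan
  calc Real.exp (s * x - (Real.log (1 + 1 / m) - 1 / (m + 1)) / m ^ 2 * x ^ 2)
      ≤ Real.exp (Real.log (1 + u)) := Real.exp_le_exp.2 (by rw [hu] at hfan ⊢; linarith)
    _ = 1 + s * x := by rw [Real.exp_log h1u, hu]

/-- **Ville's inequality** for nonnegative supermartingales (discrete time). -/
lemma ville_ineq {Ω : Type*} {m0 : MeasurableSpace Ω} {μ : Measure Ω} [IsFiniteMeasure μ]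
    {𝒢 : Filtration ℕ m0} {f : ℕ → Ω → ℝ}
    (hsup : Supermartingale f 𝒢 μ) (hnonneg : ∀ n ω, 0 ≤ f n ω)
    {ε : ℝ} (hε : 0 < ε) :
    μ {ω | ∃ n, ε ≤ f n ω} ≤ ENNReal.ofReal ((∫ ω, f 0 ω ∂μ) / ε) := by
  have hmeas : ∀ k, MeasurableSet {ω | ε ≤ f k ω} := fun k =>
    measurableSet_le measurable_const ((hsup.stronglyMeasurable k).measurable.le (𝒢.le k))
  set A : ℕ → Set Ω := fun N => ⋃ k ∈ Set.Iic N, {ω | ε ≤ f k ω} with hA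
  have hAmeas : ∀ N, MeasurableSet (A N) := fun N =>
    MeasurableSet.biUnion (Set.to_countable _) fun k _ => hmeas k
  have hmono : Monotone A := fun i j hij =>
    Set.biUnion_subset_biUnion_left (Set.Iic_subset_Iic.2 hij)
  have hset : {ω | ∃ n, ε ≤ f n ω} = ⋃ N, A N := by
    ext ω
    simp only [hA, Set.mem_setOf_eq, Set.mem_iUnion, Set.mem_Iic]
    constructor
    · rintro ⟨n, hn⟩; exact ⟨n, n, le_refl n, hn⟩
    · rintro ⟨N, k, _, hk⟩; exact ⟨k, hk⟩
  rw [hset, hmono.measure_iUnion]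
  refine iSup_le fun N => ?_
  set τ : Ω → ℕ∞ := fun ω => (hittingBtwn f (Set.Ici ε) 0 N ω : ℕ) with hτdef
  have hτ : IsStoppingTime 𝒢 τ :=
    hsup.stronglyAdapted.adapted.isStoppingTime_hittingBtwn measurableSet_Ici
  have hτle : ∀ ω, τ ω ≤ N := fun ω => by
    simp only [hτdef]; exact_mod_cast (hittingBtwn_le (u := f) (s := Set.Ici ε) (n := 0) ω)
  have hint : Integrable (stoppedValue f τ) μ :=
    integrable_stoppedValue ℕ hτ hsup.integrable hτle
  have hsv_nonneg : 0 ≤ᵐ[μ] stoppedValue f τ := ae_of_all _ fun ω => hnonneg _ _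
  have hEsv : ∫ ω, stoppedValue f τ ω ∂μ ≤ ∫ ω, f 0 ω ∂μ := by
    have h := hsup.neg.expected_stoppedValue_mono (isStoppingTime_const 𝒢 0) hτ
      (fun ω => zero_le) hτle
    have h1 : stoppedValue (-f) (fun _ => ((0:ℕ) : WithTop ℕ)) = fun ω => -(f 0 ω) := rfl
    have h2 : stoppedValue (-f) τ = fun ω => -(stoppedValue f τ ω) := rfl
    replace h : -(∫ ω, f 0 ω ∂μ) ≤ -(∫ ω, stoppedValue f τ ω ∂μ) := by
      rw [← integral_neg, ← integral_neg]; exact h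
    linarith
  have hlower : ∀ ω ∈ A N, ε ≤ stoppedValue f τ ω := by
    intro ω hω
    apply stoppedValue_hittingBtwn_mem
    simp only [hA, Set.mem_iUnion, Set.mem_Iic, Set.mem_setOf_eq] at hω
    obtain ⟨k, hk, hω⟩ := hω
    exact ⟨k, ⟨Nat.zero_le _, hk⟩, hω⟩
  have h1 : ε * (μ (A N)).toReal ≤ ∫ ω, f 0 ω ∂μ :=
    calc ε * (μ (A N)).toReal ≤ ∫ ω in A N, stoppedValue f τ ω ∂μ :=
          (mul_comm ε _).trans_le (smul_eq_mul _ ε ▸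
            setIntegral_ge_of_const_le (hAmeas N) (measure_ne_top μ _) hlower hint.integrableOn)
    _ ≤ ∫ ω, stoppedValue f τ ω ∂μ := setIntegral_le_integral hint hsv_nonneg
    _ ≤ _ := hEsv
  rw [← ENNReal.ofReal_toReal (measure_ne_top μ (A N))]
  exact ENNReal.ofReal_le_ofReal ((le_div_iff₀ hε).2 (by linarith [h1]))

/-- If a.s. positive integrable `q` has zero integral on `s`, then `s` is null. -/
lemma null_of_setIntegral_zero {Ω : Type*} {m0 : MeasurableSpace Ω} {μ : Measure Ω}
    {q : Ω → ℝ} {s : Set Ω} (hqint : Integrable q μ) (hq_pos : ∀ᵐ ω ∂μ, 0 < q ω)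
    (h0 : ∫ ω in s, q ω ∂μ = 0) : μ s = 0 := by
  by_contra hms
  have hnull2 : μ (s \ Function.support q) = 0 := by
    apply measure_mono_null (fun ω hω => ?_) (ae_iff.1 hq_pos)
    simp only [Set.mem_setOf_eq, not_lt]
    have : q ω = 0 := by
      by_contra hq0'
      exact hω.2 hq0'
    rw [this]
  have hss : μ s ≤ μ (Function.support q ∩ s) := by
    calc μ s ≤ μ ((Function.support q ∩ s) ∪ (s \ Function.support q)) := measure_mono
          (fun ω hω => by
            by_cases h : ω ∈ Function.support q
            exacts [Or.inl ⟨h, hω⟩, Or.inr ⟨hω, h⟩])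
      _ ≤ μ (Function.support q ∩ s) + μ (s \ Function.support q) := measure_union_le _ _
      _ = μ (Function.support q ∩ s) := by rw [hnull2, add_zero]
  have hpos : 0 < μ (Function.support q ∩ s) := lt_of_lt_of_le (pos_iff_ne_zero.2 hms) hss
  have := (setIntegral_pos_iff_support_of_nonneg_ae
    (ae_restrict_of_ae (hq_pos.mono fun ω h => h.le)) hqint.integrableOn).2 hpos
  rw [h0] at this
  exact lt_irrefl 0 this

/-- If `Z` is `mF`-measurable, agrees in absolute value with an a.s. `m`-bounded `X` on the
event `{g = 1}`, and the conditional probability `q` of that event is a.s. positive, then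
`Z` is a.s. bounded by `m`. -/
lemma ae_bound_aux {Ω : Type*} {m0 : MeasurableSpace Ω} {μ : Measure Ω} [IsProbabilityMeasure μ]
    {mF : MeasurableSpace Ω} (hle : mF ≤ m0) {Z q g X : Ω → ℝ} {m : ℝ}
    (hZ : StronglyMeasurable[mF] Z)
    (hgmeas : AEStronglyMeasurable[m0] g μ)
    (hg01 : ∀ ω, g ω = 0 ∨ g ω = 1)
    (hq : q =ᵐ[μ] μ[g | mF])
    (hq_pos : ∀ᵐ ω ∂μ, 0 < q ω)
    (hXbd : ∀ᵐ ω ∂μ, |X ω| ≤ m)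
    (hrel : ∀ᵐ ω ∂μ, g ω = 1 → |X ω| = |Z ω|) :
    ∀ᵐ ω ∂μ, |Z ω| ≤ m := by
  haveI : SigmaFinite (μ.trim hle) := inferInstance
  set s : Set Ω := {ω | m < |Z ω|} with hsdef
  have hsF : MeasurableSet[mF] s := measurableSet_lt measurable_const hZ.measurable.abs
  have hs : MeasurableSet[m0] s := hle _ hsF
  have hgint : Integrable g μ := by
    refine Integrable.mono' (integrable_const (1:ℝ)) hgmeas (ae_of_all _ fun ω => ?_)
    rcases hg01 ω with h | h <;> simp [h]
  have hqint : Integrable q μ := integrable_condExp.congr hq.symm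
  have hnull : ∀ᵐ ω ∂μ, ¬(ω ∈ s ∧ g ω = 1) := by
    filter_upwards [hXbd, hrel] with ω h1 h2
    rintro ⟨hωs, hg1⟩
    have h3 := h2 hg1
    simp only [hsdef, Set.mem_setOf_eq] at hωs
    rw [h3] at h1
    linarith
  have heq : ∫ ω in s, q ω ∂μ = ∫ ω in s, g ω ∂μ := by
    calc ∫ ω in s, q ω ∂μ = ∫ ω in s, (μ[g | mF]) ω ∂μ :=
          integral_congr_ae (ae_restrict_of_ae hq)
      _ = ∫ ω in s, g ω ∂μ := setIntegral_condExp hle hgint hsF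
  have hg0 : ∫ ω in s, g ω ∂μ = 0 := by
    have : g =ᵐ[μ.restrict s] (fun _ => (0:ℝ)) := by
      rw [EventuallyEq, ae_restrict_iff' (μ := μ) hs]
      filter_upwards [hnull] with ω h hωs
      rcases hg01 ω with h0 | h1
      · exact h0
      · exact absurd ⟨hωs, h1⟩ h
    rw [integral_congr_ae this]; simp
  have hq0 : ∫ ω in s, q ω ∂μ = 0 := heq.trans hg0
  have hμs : μ s = 0 := null_of_setIntegral_zero hqint hq_pos hq0
  rw [ae_iff]
  apply measure_mono_null _ hμs
  intro ω hω
  simp only [Set.mem_setOf_eq, not_le] at hω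
  exact hω

/-- The exponential process `exp(s·Σ(Xᵢ-Tᵢ) - ψ·ΣXᵢ²)` is a supermartingale, given the key
pointwise inequality `exp(s x - ψ x²) ≤ 1 + s x` on `|x| ≤ m` and `E[Xᵢ|ℱᵢ₋₁] = Tᵢ`. -/
lemma super_aux {Ω : Type*} {m0 : MeasurableSpace Ω} {μ : Measure Ω} [IsProbabilityMeasure μ]
    (ℱ : Filtration ℕ m0) (X T : ℕ → Ω → ℝ) (m s ψ : ℝ) (hm : 0 < m)
    (hXmeas : ∀ i, 1 ≤ i → StronglyMeasurable[ℱ i] (X i))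
    (hTmeas : ∀ i, 1 ≤ i → StronglyMeasurable[ℱ (i - 1)] (T i))
    (hXint : ∀ i, 1 ≤ i → Integrable (X i) μ)
    (hXbd : ∀ i, 1 ≤ i → ∀ᵐ ω ∂μ, |X i ω| ≤ m)
    (hTbd : ∀ i, 1 ≤ i → ∀ᵐ ω ∂μ, |T i ω| ≤ 2 * m)
    (hce : ∀ i, 1 ≤ i → μ[X i | ℱ (i - 1)] =ᵐ[μ] T i)
    (hψ0 : 0 ≤ ψ)
    (hkey : ∀ x : ℝ, |x| ≤ m → Real.exp (s * x - ψ * x ^ 2) ≤ 1 + s * x) :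
    Supermartingale (fun n ω => Real.exp (s * (∑ i ∈ Finset.Icc 1 n, (X i ω - T i ω))
      - ψ * ∑ i ∈ Finset.Icc 1 n, (X i ω) ^ 2)) ℱ μ := by
  set f : ℕ → Ω → ℝ := fun n ω => Real.exp (s * (∑ i ∈ Finset.Icc 1 n, (X i ω - T i ω))
      - ψ * ∑ i ∈ Finset.Icc 1 n, (X i ω) ^ 2) with hf
  have hTmeas' : ∀ i, 1 ≤ i → StronglyMeasurable[ℱ i] (T i) := fun i hi =>
    (hTmeas i hi).mono (ℱ.mono (Nat.sub_le i 1))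
  have hmeas : ∀ n, StronglyMeasurable[ℱ n] (f n) := by
    intro n
    apply Continuous.comp_stronglyMeasurable Real.continuous_exp
    apply StronglyMeasurable.sub
    · apply StronglyMeasurable.const_mul
      apply Finset.stronglyMeasurable_fun_sum
      intro i hi
      rw [Finset.mem_Icc] at hi
      exact ((hXmeas i hi.1).mono (ℱ.mono hi.2)).sub ((hTmeas' i hi.1).mono (ℱ.mono hi.2))
    · apply StronglyMeasurable.const_mul
      apply Finset.stronglyMeasurable_fun_sum
      intro i hi
      rw [Finset.mem_Icc] at hi
      exact ((hXmeas i hi.1).mono (ℱ.mono hi.2)).pow 2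
  have hbd_ae : ∀ n : ℕ, ∀ᵐ ω ∂μ, ∀ i ∈ Finset.Icc 1 n, |X i ω| ≤ m ∧ |T i ω| ≤ 2 * m := by
    intro n
    rw [Finset.eventually_all]
    intro i hi
    rw [Finset.mem_Icc] at hi
    filter_upwards [hXbd i hi.1, hTbd i hi.1] with ω h1 h2 using ⟨h1, h2⟩
  have hintf : ∀ n, Integrable (f n) μ := by
    intro n
    apply Integrable.mono' (integrable_const (Real.exp (|s| * (3 * m) * n)))
      ((hmeas n).mono (ℱ.le n)).aestronglyMeasurable
    filter_upwards [hbd_ae n] with ω hω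
    rw [hf, Real.norm_eq_abs, Real.abs_exp, Real.exp_le_exp]
    have hM : |∑ i ∈ Finset.Icc 1 n, (X i ω - T i ω)| ≤ 3 * m * n := by
      calc |∑ i ∈ Finset.Icc 1 n, (X i ω - T i ω)|
          ≤ ∑ i ∈ Finset.Icc 1 n, |X i ω - T i ω| := Finset.abs_sum_le_sum_abs _ _
        _ ≤ ∑ _i ∈ Finset.Icc 1 n, (3 * m) := by
            apply Finset.sum_le_sum
            intro i hi
            have := hω i hi
            calc |X i ω - T i ω| ≤ |X i ω| + |T i ω| := by
                  rw [← Real.norm_eq_abs, ← Real.norm_eq_abs, ← Real.norm_eq_abs]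
                  exact norm_sub_le _ _
              _ ≤ 3 * m := by linarith [this.1, this.2]
        _ = 3 * m * n := by rw [Finset.sum_const, Nat.card_Icc]; simp; ring
    have hV : 0 ≤ ∑ i ∈ Finset.Icc 1 n, (X i ω) ^ 2 :=
      Finset.sum_nonneg fun i _ => sq_nonneg _
    calc s * (∑ i ∈ Finset.Icc 1 n, (X i ω - T i ω)) - ψ * ∑ i ∈ Finset.Icc 1 n, (X i ω) ^ 2
        ≤ s * (∑ i ∈ Finset.Icc 1 n, (X i ω - T i ω)) := by nlinarith
      _ ≤ |s * (∑ i ∈ Finset.Icc 1 n, (X i ω - T i ω))| := le_abs_self _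
      _ = |s| * |∑ i ∈ Finset.Icc 1 n, (X i ω - T i ω)| := abs_mul _ _
      _ ≤ |s| * (3 * m * n) := mul_le_mul_of_nonneg_left hM (abs_nonneg _)
      _ = |s| * (3 * m) * n := by ring
  apply supermartingale_nat (fun n => hmeas n) hintf
  intro i
  set Hf : Ω → ℝ := fun ω => f i ω * Real.exp (-(s * T (i + 1) ω)) with hHf
  set K : Ω → ℝ := fun ω => Real.exp (s * X (i + 1) ω - ψ * (X (i + 1) ω) ^ 2) with hKdef
  have hfactor : f (i + 1) = Hf * K := by
    funext ω
    simp only [hf, hHf, hKdef, Pi.mul_apply]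
    rw [Finset.sum_Icc_succ_top (by omega : 1 ≤ i + 1),
      Finset.sum_Icc_succ_top (by omega : 1 ≤ i + 1), ← Real.exp_add, ← Real.exp_add]
    congr 1
    ring
  have hTi : StronglyMeasurable[ℱ i] (T (i + 1)) := by
    have := hTmeas (i + 1) (by omega)
    rwa [Nat.add_sub_cancel] at this
  have hHfMeas : StronglyMeasurable[ℱ i] Hf :=
    (hmeas i).mul (Continuous.comp_stronglyMeasurable Real.continuous_exp
      (hTi.const_mul s).neg)
  have hKint : Integrable K μ := by
    have hKm0 : StronglyMeasurable[m0] K := by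
      have h := (hXmeas (i + 1) (by omega)).mono (ℱ.le _)
      exact Continuous.comp_stronglyMeasurable Real.continuous_exp
        ((h.const_mul s).sub ((h.pow 2).const_mul ψ))
    refine Integrable.mono' (integrable_const (Real.exp (|s| * m)))
      hKm0.aestronglyMeasurable ?_
    filter_upwards [hXbd (i + 1) (by omega)] with ω hω
    show ‖K ω‖ ≤ Real.exp (|s| * m)
    simp only [hKdef, Real.norm_eq_abs, Real.abs_exp, Real.exp_le_exp]
    have : s * X (i + 1) ω ≤ |s| * m := by
      calc s * X (i + 1) ω ≤ |s * X (i + 1) ω| := le_abs_self _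
        _ = |s| * |X (i + 1) ω| := abs_mul _ _
        _ ≤ |s| * m := mul_le_mul_of_nonneg_left hω (abs_nonneg _)
    nlinarith [sq_nonneg (X (i + 1) ω)]
  have hHfKint : Integrable (Hf * K) μ := by rw [← hfactor]; exact hintf (i + 1)
  have h1int : Integrable (fun ω => 1 + s * X (i + 1) ω) μ := by
    apply Integrable.add (integrable_const 1)
    exact (hXint (i + 1) (by omega)).const_mul s
  have step1 : μ[f (i + 1) | ℱ i] =ᵐ[μ] Hf * μ[K | ℱ i] := by
    rw [hfactor]
    exact condExp_mul_of_stronglyMeasurable_left hHfMeas hHfKint hKint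
  have step2 : μ[K | ℱ i] ≤ᵐ[μ] μ[fun ω => 1 + s * X (i + 1) ω | ℱ i] := by
    apply condExp_mono hKint h1int
    filter_upwards [hXbd (i + 1) (by omega)] with ω hω
    exact hkey _ hω
  have step3 : μ[fun ω => 1 + s * X (i + 1) ω | ℱ i] =ᵐ[μ] fun ω => 1 + s * T (i + 1) ω := by
    have hadd : μ[fun ω => 1 + s * X (i + 1) ω | ℱ i]
        =ᵐ[μ] μ[(fun _ => (1:ℝ)) | ℱ i] + μ[fun ω => s * X (i + 1) ω | ℱ i] := by
      have := condExp_add (μ := μ) (m := ℱ i) (integrable_const (1:ℝ))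
        ((hXint (i + 1) (by omega)).const_mul s)
      exact this
    have hsmul : μ[fun ω => s * X (i + 1) ω | ℱ i] =ᵐ[μ] fun ω => s * (μ[X (i + 1) | ℱ i]) ω := by
      have := condExp_smul (μ := μ) (m := ℱ i) s (X (i + 1))
      exact this
    have hceX : μ[X (i + 1) | ℱ i] =ᵐ[μ] T (i + 1) := by
      have := hce (i + 1) (by omega)
      rwa [Nat.add_sub_cancel] at this
    filter_upwards [hadd, hsmul, hceX.fun_comp (fun x => s * x)] with ω h1 h2 h3
    rw [h1]
    simp only [Pi.add_apply, condExp_const (ℱ.le i)]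
    rw [h2]
    simp only [Function.comp] at h3
    rw [h3]
  calc μ[f (i + 1) | ℱ i] =ᵐ[μ] Hf * μ[K | ℱ i] := step1
    _ ≤ᵐ[μ] f i := by
      filter_upwards [step2, step3] with ω h2 h3
      have hHf0 : 0 ≤ Hf ω := by
        rw [hHf]
        positivity
      calc Hf ω * (μ[K | ℱ i]) ω ≤ Hf ω * (1 + s * T (i + 1) ω) := by
            apply mul_le_mul_of_nonneg_left _ hHf0
            rw [← h3]; exact h2
        _ ≤ Hf ω * Real.exp (s * T (i + 1) ω) := by
            apply mul_le_mul_of_nonneg_left _ hHf0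
            linarith [Real.add_one_le_exp (s * T (i + 1) ω)]
        _ = f i ω := by
            rw [hHf, mul_assoc, ← Real.exp_add]
            simp

end AuxLemmas

/-- **exact design-based confidence sequence for the ATE, two-sided.**
If `|τ̂_i| ≤ m` a.s. with constant `m > 0`, then for any `α ∈ (0,1)`,
`P(∃ n ≥ 1 : |(1/n)Σ τ̂_i − τ̄_n| ≥ (m(m+1)/n)·log(2/α)
  + (S_n/n)·(((m+1)/m)·log(1+1/m) − 1/m)) ≤ α`,
i.e. the intervals form a valid `(1−α)` confidence sequence for the ATE `τ̄_n`. -/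
theorem exact_design_based_confidence_sequence_ate
    {Ω : Type*} {m0 : MeasurableSpace Ω} {μ : Measure Ω} [IsProbabilityMeasure μ]
    (ℱ : Filtration ℕ m0)
    (Y1 Y0 : ℕ → Ω → ℝ) (W : ℕ → Ω → ℝ) (p1 : ℕ → Ω → ℝ) (Y τhat σhatSq : ℕ → Ω → ℝ)
    (m : ℝ) (hm : 0 < m)
    -- potential outcomes are `F_{i-1}`-measurable
    (hY1 : ∀ i, 1 ≤ i → StronglyMeasurable[ℱ (i - 1)] (Y1 i))
    (hY0 : ∀ i, 1 ≤ i → StronglyMeasurable[ℱ (i - 1)] (Y0 i))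
    -- the treatment is `{0,1}`-valued and `F_i`-measurable
    (hW01 : ∀ i ω, W i ω = 0 ∨ W i ω = 1)
    (hWmeas : ∀ i, 1 ≤ i → StronglyMeasurable[ℱ i] (W i))
    -- `p_i(1) = P(W_i = 1 | F_{i-1})` is `F_{i-1}`-measurable and lies in `(0,1)` a.s.
    (hp1meas : ∀ i, 1 ≤ i → StronglyMeasurable[ℱ (i - 1)] (p1 i))
    (hp1 : ∀ i, 1 ≤ i →
      p1 i =ᵐ[μ] μ[fun ω => if W i ω = 1 then (1 : ℝ) else 0 | ℱ (i - 1)])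
    (hp_pos : ∀ i, 1 ≤ i → ∀ᵐ ω ∂μ, 0 < p1 i ω ∧ p1 i ω < 1)
    -- observed outcome
    (hY : ∀ i ω, Y i ω = W i ω * Y1 i ω + (1 - W i ω) * Y0 i ω)
    -- IPW estimator
    (hτhat : ∀ i ω, τhat i ω =
      (if W i ω = 1 then Y i ω / p1 i ω else 0) -
      (if W i ω = 0 then Y i ω / (1 - p1 i ω) else 0))
    -- variance estimator (here `σ̂_i² = τ̂_i²`)
    (hσhatSq : ∀ i ω, σhatSq i ω =
      (if W i ω = 1 then (Y i ω) ^ 2 / (p1 i ω) ^ 2 else 0) +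
      (if W i ω = 0 then (Y i ω) ^ 2 / (1 - p1 i ω) ^ 2 else 0))
    (hint : ∀ i, 1 ≤ i → Integrable (τhat i) μ)
    -- uniform a.s. bound on the IPW estimates
    (hbdd : ∀ i, 1 ≤ i → ∀ᵐ ω ∂μ, |τhat i ω| ≤ m)
    (α : ℝ) (hα : α ∈ Set.Ioo (0 : ℝ) 1) :
    μ {ω | ∃ n : ℕ, 1 ≤ n ∧
        (m * (m + 1) / (n : ℝ)) * Real.log (2 / α) +
          ((∑ i ∈ Finset.Icc 1 n, σhatSq i ω) / (n : ℝ)) *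
            ((m + 1) / m * Real.log (1 + 1 / m) - 1 / m)
        ≤ |(∑ i ∈ Finset.Icc 1 n, τhat i ω) / (n : ℝ) -
            (∑ i ∈ Finset.Icc 1 n, (Y1 i ω - Y0 i ω)) / (n : ℝ)|}
      ≤ ENNReal.ofReal α := by
  obtain ⟨hα0, hα1⟩ := hα
  have hm1 : (0:ℝ) < m + 1 := by linarith
  have hm0 : m ≠ 0 := ne_of_gt hm
  have hm10 : m + 1 ≠ 0 := ne_of_gt hm1
  set l : ℝ := 1 / (m * (m + 1)) with hl
  set ψ : ℝ := (Real.log (1 + 1 / m) - 1 / (m + 1)) / m ^ 2 with hψ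
  set c : ℝ := (m + 1) / m * Real.log (1 + 1 / m) - 1 / m with hc
  have hl0 : 0 < l := by rw [hl]; positivity
  have hψ0 : 0 < ψ := by
    have ha0 : (0:ℝ) < 1 / (m + 1) := by positivity
    have ha1 : 1 / (m + 1) < 1 := by rw [div_lt_one hm1]; linarith
    have h1 := aux_log1 ha0 ha1
    have hlog : Real.log (1 + 1 / m) = -Real.log (1 - 1 / (m + 1)) := by
      rw [← Real.log_inv]
      congr 1
      field_simp
      rw [add_sub_cancel_right, div_self (ne_of_gt hm)]
    rw [hψ, hlog]
    have : (0:ℝ) < (1 / (m + 1)) ^ 2 / 2 := by positivity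
    apply div_pos _ (by positivity)
    nlinarith
  have hlc : l * c = ψ := by
    rw [hl, hc, hψ]
    field_simp
  have hlm : l * (m * (m + 1)) = 1 := by rw [hl]; field_simp
  -- σ̂² = τ̂² pointwise
  have hσeq : ∀ i ω, σhatSq i ω = (τhat i ω) ^ 2 := by
    intro i ω
    rcases hW01 i ω with h | h <;>
    · rw [hσhatSq, hτhat, h]
      norm_num [div_pow, neg_sq]
      try ring
  -- measurability of τhat
  have hτmeas : ∀ i, 1 ≤ i → StronglyMeasurable[ℱ i] (τhat i) := by
    intro i hi
    have hτeq : τhat i = fun ω => (if W i ω = 1 then Y i ω / p1 i ω else 0) -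
        (if W i ω = 0 then Y i ω / (1 - p1 i ω) else 0) := funext (hτhat i)
    have hW : Measurable[ℱ i] (W i) := (hWmeas i hi).measurable
    have hY1' : Measurable[ℱ i] (Y1 i) := ((hY1 i hi).mono (ℱ.mono (Nat.sub_le i 1))).measurable
    have hY0' : Measurable[ℱ i] (Y0 i) := ((hY0 i hi).mono (ℱ.mono (Nat.sub_le i 1))).measurable
    have hp : Measurable[ℱ i] (p1 i) := ((hp1meas i hi).mono (ℱ.mono (Nat.sub_le i 1))).measurable
    have hYm : Measurable[ℱ i] (Y i) := by
      have : Y i = fun ω => W i ω * Y1 i ω + (1 - W i ω) * Y0 i ω := funext (hY i)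
      rw [this]
      exact (hW.mul hY1').add ((measurable_const.sub hW).mul hY0')
    rw [hτeq]
    apply Measurable.stronglyMeasurable
    apply Measurable.sub
    · exact Measurable.ite (hW (measurableSet_singleton 1)) (hYm.div hp) measurable_const
    · exact Measurable.ite (hW (measurableSet_singleton 0))
        (hYm.div (measurable_const.sub hp)) measurable_const
  -- g-functions and their integrability properties
  have hg1meas : ∀ i, 1 ≤ i →
      AEStronglyMeasurable (fun ω => if W i ω = 1 then (1:ℝ) else 0) μ := by
    intro i hi
    have hW : Measurable (W i) := ((hWmeas i hi).mono (ℱ.le i)).measurable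
    exact (Measurable.ite (hW (measurableSet_singleton 1)) measurable_const
      measurable_const).aestronglyMeasurable
  have hg0meas : ∀ i, 1 ≤ i →
      AEStronglyMeasurable (fun ω => if W i ω = 0 then (1:ℝ) else 0) μ := by
    intro i hi
    have hW : Measurable (W i) := ((hWmeas i hi).mono (ℱ.le i)).measurable
    exact (Measurable.ite (hW (measurableSet_singleton 0)) measurable_const
      measurable_const).aestronglyMeasurable
  -- a.e. bound on Y1/p1
  have hAbd : ∀ i, 1 ≤ i → ∀ᵐ ω ∂μ, |Y1 i ω / p1 i ω| ≤ m := by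
    intro i hi
    have hZ : StronglyMeasurable[ℱ (i - 1)] (fun ω => Y1 i ω / p1 i ω) :=
      ((hY1 i hi).measurable.div (hp1meas i hi).measurable).stronglyMeasurable
    apply ae_bound_aux (ℱ.le (i - 1)) hZ (hg1meas i hi)
      (fun ω => by by_cases h : W i ω = 1 <;> simp [h]) (hp1 i hi)
      ((hp_pos i hi).mono fun ω h => h.1) (hbdd i hi)
    apply ae_of_all
    intro ω hg
    have hw1 : W i ω = 1 := by
      by_contra hne
      rw [if_neg hne] at hg
      norm_num at hg
    have hYeq : Y i ω = Y1 i ω := by rw [hY, hw1]; ring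
    rw [hτhat, if_pos hw1, if_neg (by rw [hw1]; norm_num), hYeq, sub_zero]
  -- a.e. bound on Y0/(1-p1)
  have hBbd : ∀ i, 1 ≤ i → ∀ᵐ ω ∂μ, |Y0 i ω / (1 - p1 i ω)| ≤ m := by
    intro i hi
    have hg1int : Integrable (fun ω => if W i ω = 1 then (1:ℝ) else 0) μ := by
      refine Integrable.mono' (integrable_const (1:ℝ)) (hg1meas i hi) (ae_of_all _ fun ω => ?_)
      by_cases h : W i ω = 1 <;> simp [h]
    have hq : (fun ω => 1 - p1 i ω) =ᵐ[μ]
        μ[fun ω => if W i ω = 0 then (1:ℝ) else 0 | ℱ (i - 1)] := by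
      have hfun : (fun ω => if W i ω = 0 then (1:ℝ) else 0)
          = (fun _ => (1:ℝ)) - (fun ω => if W i ω = 1 then (1:ℝ) else 0) := by
        funext ω
        rcases hW01 i ω with h | h <;> simp [h]
      rw [hfun]
      have hsub := condExp_sub (μ := μ) (m := ℱ (i - 1)) (integrable_const (1:ℝ)) hg1int
      have hconst := condExp_const (ℱ.le (i - 1)) (1:ℝ) (μ := μ)
      filter_upwards [hsub, (hp1 i hi).symm] with ω h1 h2
      rw [h1]
      simp only [Pi.sub_apply, hconst]
      rw [← h2]
    have hZ : StronglyMeasurable[ℱ (i - 1)] (fun ω => Y0 i ω / (1 - p1 i ω)) :=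
      ((hY0 i hi).measurable.div
        (measurable_const.sub (hp1meas i hi).measurable)).stronglyMeasurable
    apply ae_bound_aux (ℱ.le (i - 1)) hZ (hg0meas i hi)
      (fun ω => by by_cases h : W i ω = 0 <;> simp [h]) hq
      ((hp_pos i hi).mono fun ω h => by linarith [h.2]) (hbdd i hi)
    apply ae_of_all
    intro ω hg
    have hw0 : W i ω = 0 := by
      by_contra hne
      rw [if_neg hne] at hg
      norm_num at hg
    have hYeq : Y i ω = Y0 i ω := by rw [hY, hw0]; ring
    rw [hτhat, if_neg (by rw [hw0]; norm_num), if_pos hw0, hYeq, zero_sub, abs_neg]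
  -- a.e. bound on Y1 - Y0
  have hTbd : ∀ i, 1 ≤ i → ∀ᵐ ω ∂μ, |Y1 i ω - Y0 i ω| ≤ 2 * m := by
    intro i hi
    filter_upwards [hAbd i hi, hBbd i hi, hp_pos i hi] with ω h1 h2 hp
    have hp0 : p1 i ω ≠ 0 := ne_of_gt hp.1
    have hp1' : 1 - p1 i ω ≠ 0 := by intro h; linarith [hp.2, sub_eq_zero.1 h]
    have e1 : |Y1 i ω| ≤ m := by
      have : Y1 i ω = Y1 i ω / p1 i ω * p1 i ω := by field_simp
      rw [this, abs_mul]
      calc |Y1 i ω / p1 i ω| * |p1 i ω| ≤ m * 1 := by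
            apply mul_le_mul h1 _ (abs_nonneg _) (by linarith [abs_nonneg (Y1 i ω / p1 i ω)])
            rw [abs_of_pos hp.1]; linarith [hp.2]
        _ = m := mul_one m
    have e2 : |Y0 i ω| ≤ m := by
      have : Y0 i ω = Y0 i ω / (1 - p1 i ω) * (1 - p1 i ω) := by field_simp
      rw [this, abs_mul]
      calc |Y0 i ω / (1 - p1 i ω)| * |1 - p1 i ω| ≤ m * 1 := by
            apply mul_le_mul h2 _ (abs_nonneg _)
              (by linarith [abs_nonneg (Y0 i ω / (1 - p1 i ω))])
            rw [abs_of_pos (by linarith [hp.2])]; linarith [hp.1]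
        _ = m := mul_one m
    calc |Y1 i ω - Y0 i ω| ≤ |Y1 i ω| + |Y0 i ω| := by
          rw [← Real.norm_eq_abs, ← Real.norm_eq_abs, ← Real.norm_eq_abs]
          exact norm_sub_le _ _
      _ ≤ 2 * m := by linarith
  -- conditional expectation identity
  have hce : ∀ i, 1 ≤ i → μ[τhat i | ℱ (i - 1)] =ᵐ[μ] fun ω => Y1 i ω - Y0 i ω := by
    intro i hi
    set A : Ω → ℝ := fun ω => Y1 i ω / p1 i ω with hA
    set B : Ω → ℝ := fun ω => -(Y0 i ω / (1 - p1 i ω)) with hB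
    set g : Ω → ℝ := fun ω => if W i ω = 1 then (1:ℝ) else 0 with hg
    have hAmF : StronglyMeasurable[ℱ (i - 1)] A :=
      ((hY1 i hi).measurable.div (hp1meas i hi).measurable).stronglyMeasurable
    have hBmF : StronglyMeasurable[ℱ (i - 1)] B :=
      (((hY0 i hi).measurable.div
        (measurable_const.sub (hp1meas i hi).measurable)).stronglyMeasurable).neg
    have hBint : Integrable B μ := by
      refine Integrable.mono' (integrable_const m)
        ((hBmF.mono (ℱ.le _)).aestronglyMeasurable) ?_
      filter_upwards [hBbd i hi] with ω hω
      rw [hB, Real.norm_eq_abs, abs_neg]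
      exact hω
    have hsplit : τhat i = fun ω => (A ω - B ω) * g ω + B ω := by
      funext ω
      rcases hW01 i ω with h | h
      · have hYeq : Y i ω = Y0 i ω := by rw [hY, h]; ring
        rw [hτhat, if_neg (by rw [h]; norm_num), if_pos h, hYeq]
        simp only [hg, hB, if_neg (show W i ω ≠ 1 by rw [h]; norm_num)]
        ring
      · have hYeq : Y i ω = Y1 i ω := by rw [hY, h]; ring
        rw [hτhat, if_pos h, if_neg (by rw [h]; norm_num), hYeq]
        simp only [hg, hA, hB, if_pos h]
        ring
    have hg1int : Integrable g μ := by
      refine Integrable.mono' (integrable_const (1:ℝ)) (hg1meas i hi) (ae_of_all _ fun ω => ?_)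
      simp only [hg]
      by_cases h : W i ω = 1 <;> simp [h]
    have hABg_int : Integrable (fun ω => (A ω - B ω) * g ω) μ := by
      have : (fun ω => (A ω - B ω) * g ω) = fun ω => τhat i ω - B ω := by
        funext ω
        have := congrFun hsplit ω
        linarith
      rw [this]
      exact (hint i hi).sub hBint
    have hsum : (fun ω => (A ω - B ω) * g ω + B ω)
        = (fun ω => (A ω - B ω) * g ω) + B := rfl
    have h1 : μ[τhat i | ℱ (i - 1)] =ᵐ[μ]
        μ[fun ω => (A ω - B ω) * g ω | ℱ (i - 1)] + μ[B | ℱ (i - 1)] := by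
      rw [hsplit, hsum]
      exact condExp_add hABg_int hBint _
    have hmulshape : (fun ω => (A ω - B ω) * g ω) = (fun ω => A ω - B ω) * g := rfl
    have h2 : μ[fun ω => (A ω - B ω) * g ω | ℱ (i - 1)] =ᵐ[μ]
        (fun ω => A ω - B ω) * μ[g | ℱ (i - 1)] := by
      rw [hmulshape]
      exact condExp_mul_of_stronglyMeasurable_left (hAmF.sub hBmF) (hmulshape ▸ hABg_int) hg1int
    have h4 : μ[B | ℱ (i - 1)] =ᵐ[μ] B := by
      rw [condExp_of_stronglyMeasurable (ℱ.le _) hBmF hBint]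
    filter_upwards [h1, h2, (hp1 i hi), h4, hp_pos i hi] with ω e1 e2 e3 e4 hp
    rw [e1]
    simp only [Pi.add_apply]
    rw [e2, e4]
    simp only [Pi.mul_apply]
    rw [← e3]
    have hp0 : p1 i ω ≠ 0 := ne_of_gt hp.1
    have hp1' : 1 - p1 i ω ≠ 0 := by intro h; linarith [hp.2, sub_eq_zero.1 h]
    simp only [hA, hB]
    field_simp
    ring
  -- the two supermartingales
  set T : ℕ → Ω → ℝ := fun i ω => Y1 i ω - Y0 i ω with hT
  have hTmeas : ∀ i, 1 ≤ i → StronglyMeasurable[ℱ (i - 1)] (T i) :=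
    fun i hi => (hY1 i hi).sub (hY0 i hi)
  have hceT : ∀ i, 1 ≤ i → μ[τhat i | ℱ (i - 1)] =ᵐ[μ] T i := hce
  have hsupP := super_aux ℱ τhat T m l ψ hm hτmeas hTmeas hint hbdd hTbd hceT hψ0.le
    (fun x hx => key_exp hm hx (Or.inl hl))
  have hsupM := super_aux ℱ τhat T m (-l) ψ hm hτmeas hTmeas hint hbdd hTbd hceT hψ0.le
    (fun x hx => key_exp hm hx (Or.inr (by rw [hl])))
  set fP : ℕ → Ω → ℝ := fun n ω => Real.exp (l * (∑ i ∈ Finset.Icc 1 n, (τhat i ω - T i ω))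
      - ψ * ∑ i ∈ Finset.Icc 1 n, (τhat i ω) ^ 2) with hfP
  set fM : ℕ → Ω → ℝ := fun n ω => Real.exp ((-l) * (∑ i ∈ Finset.Icc 1 n, (τhat i ω - T i ω))
      - ψ * ∑ i ∈ Finset.Icc 1 n, (τhat i ω) ^ 2) with hfM
  have hεα : (0:ℝ) < 2 / α := by positivity
  have hinit : ∀ (f : ℕ → Ω → ℝ), (∀ ω, f 0 ω = 1) → ∫ ω, f 0 ω ∂μ = 1 := by
    intro f hf1
    have : f 0 = fun _ => (1:ℝ) := funext hf1
    rw [this, integral_const]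
    simp
  have hP0 : ∫ ω, fP 0 ω ∂μ = 1 := hinit fP fun ω => by simp [hfP]
  have hM0 : ∫ ω, fM 0 ω ∂μ = 1 := hinit fM fun ω => by simp [hfM]
  have hVP := ville_ineq hsupP (fun n ω => (Real.exp_pos _).le) hεα
  have hVM := ville_ineq hsupM (fun n ω => (Real.exp_pos _).le) hεα
  rw [hP0] at hVP
  rw [hM0] at hVM
  -- event inclusion
  have hsub : {ω | ∃ n : ℕ, 1 ≤ n ∧
        (m * (m + 1) / (n : ℝ)) * Real.log (2 / α) +
          ((∑ i ∈ Finset.Icc 1 n, σhatSq i ω) / (n : ℝ)) *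
            ((m + 1) / m * Real.log (1 + 1 / m) - 1 / m)
        ≤ |(∑ i ∈ Finset.Icc 1 n, τhat i ω) / (n : ℝ) -
            (∑ i ∈ Finset.Icc 1 n, (Y1 i ω - Y0 i ω)) / (n : ℝ)|}
      ⊆ {ω | ∃ n, 2 / α ≤ fP n ω} ∪ {ω | ∃ n, 2 / α ≤ fM n ω} := by
    intro ω hω
    obtain ⟨n, hn1, hineq⟩ := hω
    have hn0 : (0:ℝ) < n := by exact_mod_cast Nat.pos_of_ne_zero (by omega)
    have hnne : (n:ℝ) ≠ 0 := ne_of_gt hn0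
    set Mv : ℝ := ∑ i ∈ Finset.Icc 1 n, (τhat i ω - T i ω) with hMv
    set V : ℝ := ∑ i ∈ Finset.Icc 1 n, (τhat i ω) ^ 2 with hV
    set L : ℝ := Real.log (2 / α) with hLdef
    have hσsum : ∑ i ∈ Finset.Icc 1 n, σhatSq i ω = V :=
      Finset.sum_congr rfl fun i _ => hσeq i ω
    have hMsum : (∑ i ∈ Finset.Icc 1 n, τhat i ω) - ∑ i ∈ Finset.Icc 1 n, (Y1 i ω - Y0 i ω)
        = Mv := by
      simp only [hMv, hT, Finset.sum_sub_distrib]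
    have habs : |(∑ i ∈ Finset.Icc 1 n, τhat i ω) / (n : ℝ) -
        (∑ i ∈ Finset.Icc 1 n, (Y1 i ω - Y0 i ω)) / (n : ℝ)| = |Mv| / n := by
      rw [div_sub_div_same, hMsum, abs_div, abs_of_pos hn0]
    rw [habs, hσsum] at hineq
    have h' : m * (m + 1) * L + V * c ≤ |Mv| := by
      have h2 := mul_le_mul_of_nonneg_right hineq hn0.le
      calc m * (m + 1) * L + V * c
          = (m * (m + 1) / (n:ℝ) * L + V / (n:ℝ) * c) * n := by
            first
            | (field_simp; ring)
            | field_simp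
        _ ≤ |Mv| / n * n := h2
        _ = |Mv| := by field_simp
    have h3 : L + ψ * V ≤ l * |Mv| := by
      have h4 := mul_le_mul_of_nonneg_left h' hl0.le
      calc L + ψ * V = l * (m * (m + 1)) * L + (l * c) * V := by rw [hlm, hlc]; ring
        _ = l * (m * (m + 1) * L + V * c) := by ring
        _ ≤ l * |Mv| := h4
    have h2α : (2:ℝ) / α = Real.exp L := (Real.exp_log hεα).symm
    rcases abs_cases Mv with ⟨he, _⟩ | ⟨he, _⟩
    · left
      refine ⟨n, ?_⟩
      rw [h2α, hfP]
      simp only [Set.mem_setOf_eq]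
      rw [Real.exp_le_exp]
      rw [he] at h3
      linarith
    · right
      refine ⟨n, ?_⟩
      rw [h2α, hfM]
      simp only [Set.mem_setOf_eq]
      rw [Real.exp_le_exp]
      rw [he] at h3
      linarith
  calc μ {ω | ∃ n : ℕ, 1 ≤ n ∧
        (m * (m + 1) / (n : ℝ)) * Real.log (2 / α) +
          ((∑ i ∈ Finset.Icc 1 n, σhatSq i ω) / (n : ℝ)) *
            ((m + 1) / m * Real.log (1 + 1 / m) - 1 / m)
        ≤ |(∑ i ∈ Finset.Icc 1 n, τhat i ω) / (n : ℝ) -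
            (∑ i ∈ Finset.Icc 1 n, (Y1 i ω - Y0 i ω)) / (n : ℝ)|}
      ≤ μ ({ω | ∃ n, 2 / α ≤ fP n ω} ∪ {ω | ∃ n, 2 / α ≤ fM n ω}) := measure_mono hsub
    _ ≤ μ {ω | ∃ n, 2 / α ≤ fP n ω} + μ {ω | ∃ n, 2 / α ≤ fM n ω} := measure_union_le _ _
    _ ≤ ENNReal.ofReal (1 / (2 / α)) + ENNReal.ofReal (1 / (2 / α)) := add_le_add hVP hVM
    _ = ENNReal.ofReal α := by
        rw [one_div_div, ← ENNReal.ofReal_add (by positivity) (by positivity)]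
        norm_num
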